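/- Lemma 3 (monotone formulas): let φ be a negation-free MDL formula, let t ∈ AP be a fixed atomic proposition, and let φ^t be the formula obtained from φ by replacing every dependence atom and every atomic proposition occurrence with t. Then φ is satisfiable if and only if φ^t is satisfiable. -/
import Mathlib


/-- Formulas of modal dependence logic over atomic propositions `AP`.
Negation occurs only in front of atoms (`natom`) and dependence atoms (`ndep`).
`dep ps q` is the dependence atom dep(p₁,…,p_{n-1};p_n) with `ps` the list
p₁,…,p_{n-1} and `q = p_n`.  `or` is dependence disjunction ∨ and
`cor` is classical disjunction ⊘. -/
inductive MDL (AP : Type) : Type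
  | top : MDL AP
  | bot : MDL AP
  | atom : AP → MDL AP
  | natom : AP → MDL AP
  | dep : List AP → AP → MDL AP
  | ndep : List AP → AP → MDL AP
  | and : MDL AP → MDL AP → MDL AP
  | or : MDL AP → MDL AP → MDL AP
  | cor : MDL AP → MDL AP → MDL AP
  | box : MDL AP → MDL AP
  | dia : MDL AP → MDL AP

/-- A Kripke frame `W = (S, R, π)`. -/
structure Frame (AP : Type) where
  S : Type
  R : S → S → Prop
  pi : S → Set AP

/-- Team semantics of MDL: `sat W φ T` means `W, T ⊨ φ`. -/
def sat {AP : Type} (W : Frame AP) : MDL AP → Set W.S → Prop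
  | .top, _ => True
  | .bot, T => T = ∅
  | .atom p, T => ∀ s ∈ T, p ∈ W.pi s
  | .natom p, T => ∀ s ∈ T, p ∉ W.pi s
  | .dep ps q, T => ∀ s₁ ∈ T, ∀ s₂ ∈ T,
      (∀ p ∈ ps, (p ∈ W.pi s₁ ↔ p ∈ W.pi s₂)) → (q ∈ W.pi s₁ ↔ q ∈ W.pi s₂)
  | .ndep _ _, T => T = ∅
  | .and φ ψ, T => sat W φ T ∧ sat W ψ T
  | .or φ ψ, T => ∃ T₁ T₂, T = T₁ ∪ T₂ ∧ sat W φ T₁ ∧ sat W ψ T₂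
  | .cor φ ψ, T => sat W φ T ∨ sat W ψ T
  | .box φ, T => sat W φ {s' | ∃ s ∈ T, W.R s s'}
  | .dia φ, T => ∃ T' : Set W.S, sat W φ T' ∧ ∀ s ∈ T, ∃ s' ∈ T', W.R s s'

/-- A formula is satisfiable iff some frame and nonempty team satisfy it. -/
def satisfiable {AP : Type} (φ : MDL AP) : Prop :=
  ∃ (W : Frame AP) (T : Set W.S), T.Nonempty ∧ sat W φ T

/-- A formula is negation-free if it contains no ¬p and no ¬dep(…;…). -/
def negFree {AP : Type} : MDL AP → Prop
  | .natom _ => False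
  | .ndep _ _ => False
  | .and φ ψ => negFree φ ∧ negFree ψ
  | .or φ ψ => negFree φ ∧ negFree ψ
  | .cor φ ψ => negFree φ ∧ negFree ψ
  | .box φ => negFree φ
  | .dia φ => negFree φ
  | _ => True

/-- Replace every dependence atom and every atomic proposition occurrence by `t`. -/
def subT {AP : Type} (t : AP) : MDL AP → MDL AP
  | .top => .top
  | .bot => .bot
  | .atom _ => .atom t
  | .natom _ => .natom t
  | .dep _ _ => .atom t
  | .ndep _ _ => .natom t
  | .and φ ψ => .and (subT t φ) (subT t ψ)
  | .or φ ψ => .or (subT t φ) (subT t ψ)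
  | .cor φ ψ => .cor (subT t φ) (subT t ψ)
  | .box φ => .box (subT t φ)
  | .dia φ => .dia (subT t φ)

/-- The frame with the same worlds and relation but full valuation. -/
def fullFrame {AP : Type} (W : Frame AP) : Frame AP :=
  ⟨W.S, W.R, fun _ => Set.univ⟩

lemma fwd_lemma {AP : Type} (t : AP) (W : Frame AP) :
    ∀ (φ : MDL AP), negFree φ → ∀ T : Set W.S,
      sat W φ T → sat (fullFrame W) (subT t φ) T := by
  intro φ
  induction φ with
  | top => intro _ T _; trivial
  | bot => intro _ T h; exact h
  | atom p => intro _ T _ s _; exact Set.mem_univ t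
  | natom p => intro h; exact absurd h not_false
  | dep ps q => intro _ T _ s _; exact Set.mem_univ t
  | ndep ps q => intro h; exact absurd h not_false
  | and φ ψ ihφ ihψ =>
      intro h T hs
      exact ⟨ihφ h.1 T hs.1, ihψ h.2 T hs.2⟩
  | or φ ψ ihφ ihψ =>
      intro h T hs
      obtain ⟨T₁, T₂, rfl, h1, h2⟩ := hs
      exact ⟨T₁, T₂, rfl, ihφ h.1 T₁ h1, ihψ h.2 T₂ h2⟩
  | cor φ ψ ihφ ihψ =>
      intro h T hs
      exact hs.elim (fun h1 => Or.inl (ihφ h.1 T h1))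
        (fun h2 => Or.inr (ihψ h.2 T h2))
  | box φ ihφ =>
      intro h T hs
      exact ihφ h _ hs
  | dia φ ihφ =>
      intro h T hs
      obtain ⟨T', h1, h2⟩ := hs
      exact ⟨T', ihφ h T' h1, h2⟩

lemma bwd_lemma {AP : Type} (t : AP) (W : Frame AP) :
    ∀ (φ : MDL AP), negFree φ → ∀ T : Set W.S,
      sat W (subT t φ) T → sat (fullFrame W) φ T := by
  intro φ
  induction φ with
  | top => intro _ T _; trivial
  | bot => intro _ T h; exact h
  | atom p => intro _ T _ s _; exact Set.mem_univ p
  | natom p => intro h; exact absurd h not_false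
  | dep ps q =>
      intro _ T _ s₁ _ s₂ _ _
      simp [fullFrame]
  | ndep ps q => intro h; exact absurd h not_false
  | and φ ψ ihφ ihψ =>
      intro h T hs
      exact ⟨ihφ h.1 T hs.1, ihψ h.2 T hs.2⟩
  | or φ ψ ihφ ihψ =>
      intro h T hs
      obtain ⟨T₁, T₂, rfl, h1, h2⟩ := hs
      exact ⟨T₁, T₂, rfl, ihφ h.1 T₁ h1, ihψ h.2 T₂ h2⟩
  | cor φ ψ ihφ ihψ =>
      intro h T hs
      exact hs.elim (fun h1 => Or.inl (ihφ h.1 T h1))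
        (fun h2 => Or.inr (ihψ h.2 T h2))
  | box φ ihφ =>
      intro h T hs
      exact ihφ h _ hs
  | dia φ ihφ =>
      intro h T hs
      obtain ⟨T', h1, h2⟩ := hs
      exact ⟨T', ihφ h T' h1, h2⟩

/-- Lemma 3 (monotone formulas). -/
theorem monotone_subst_sat {AP : Type} (φ : MDL AP) (t : AP) (hφ : negFree φ) :
    satisfiable φ ↔ satisfiable (subT t φ) := by
  constructor
  · rintro ⟨W, T, hne, hs⟩
    exact ⟨fullFrame W, T, hne, fwd_lemma t W φ hφ T hs⟩
  · rintro ⟨W, T, hne, hs⟩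
    exact ⟨fullFrame W, T, hne, bwd_lemma t W φ hφ T hs⟩
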